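/- Let E ∈ ℝ² with E ≠ 0, let R, X ∈ ℝ with R ≠ 0, and let Imax > 0. Define Q(x) := (3/2)X‖x‖² + (3/2)⟨JE,x⟩ and V(x) := (R² + X²)‖x‖² + 2⟨ZᵀE, x⟩ + ‖E‖² for x ∈ ℝ². Then the image set { (Q(x), V(x)) : x ∈ ℝ², ‖x‖ ≤ Imax } is a convex subset of ℝ². -/

import Mathlib

open scoped RealInnerProductSpace

/-- The matrix `J` with rows `(0,1)` and `(-1,0)`. -/
def Jmat : Matrix (Fin 2) (Fin 2) ℝ := !![0, 1; -1, 0]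

/-- The impedance matrix `Z` with rows `(R,-X)` and `(X,R)`. -/
def Zmat (R X : ℝ) : Matrix (Fin 2) (Fin 2) ℝ := !![R, -X; X, R]

/-- Interpret a plain vector `Fin 2 → ℝ` as an element of Euclidean space `ℝ²`. -/
noncomputable def toE (v : Fin 2 → ℝ) : EuclideanSpace ℝ (Fin 2) := WithLp.toLp 2 v

/-- The vector `J E ∈ ℝ²`. -/
noncomputable def Jv (E : EuclideanSpace ℝ (Fin 2)) : EuclideanSpace ℝ (Fin 2) :=
  toE (Jmat.mulVec (fun i => E i))

/-- The vector `Zᵀ E ∈ ℝ²`. -/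
noncomputable def ZtE (R X : ℝ) (E : EuclideanSpace ℝ (Fin 2)) : EuclideanSpace ℝ (Fin 2) :=
  toE ((Zmat R X).transpose.mulVec (fun i => E i))

set_option maxHeartbeats 1000000 in
private lemma stmt4_aux (E : EuclideanSpace ℝ (Fin 2)) (R X : ℝ) (hR : R ≠ 0)
    (Imax : ℝ) (hI : 0 < Imax) (a b : EuclideanSpace ℝ (Fin 2)) :
    Convex ℝ {p : ℝ × ℝ | ∃ x : EuclideanSpace ℝ (Fin 2), ‖x‖ ≤ Imax ∧
      p = ((3 / 2) * X * ‖x‖ ^ 2 + (3 / 2) * ⟪a, x⟫,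
           (R ^ 2 + X ^ 2) * ‖x‖ ^ 2 + 2 * ⟪b, x⟫ + ‖E‖ ^ 2)} := by
  classical
  intro p hp q hq lam mu hlam hmu hsum
  obtain ⟨x, hx, rfl⟩ := hp
  obtain ⟨y, hy, rfl⟩ := hq
  have hR2 : (0:ℝ) < R ^ 2 := by positivity
  have hd0 : (0:ℝ) < R ^ 2 + X ^ 2 := by positivity
  set m2 : EuclideanSpace ℝ (Fin 2) :=
    (3 * X) • b - ((3 / 2) * (R ^ 2 + X ^ 2)) • a with hm2
  have key : ∀ z : EuclideanSpace ℝ (Fin 2),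
      (3 / 2) * X * ((R ^ 2 + X ^ 2) * ‖z‖ ^ 2 + 2 * ⟪b, z⟫ + ‖E‖ ^ 2)
        - (R ^ 2 + X ^ 2) * ((3 / 2) * X * ‖z‖ ^ 2 + (3 / 2) * ⟪a, z⟫)
        = ⟪m2, z⟫ + (3 / 2) * X * ‖E‖ ^ 2 := by
    intro z
    rw [hm2, inner_sub_left, real_inner_smul_left, real_inner_smul_left]
    ring
  set xl : EuclideanSpace ℝ (Fin 2) := lam • x + mu • y with hxl
  have hxlI : ‖xl‖ ≤ Imax := by
    calc ‖xl‖ ≤ ‖lam • x‖ + ‖mu • y‖ := norm_add_le _ _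
    _ = lam * ‖x‖ + mu * ‖y‖ := by
        rw [norm_smul, norm_smul, Real.norm_eq_abs, Real.norm_eq_abs,
          abs_of_nonneg hlam, abs_of_nonneg hmu]
    _ ≤ lam * Imax + mu * Imax := by
        apply add_le_add <;> apply mul_le_mul_of_nonneg_left <;> assumption
    _ = Imax := by rw [← add_mul, hsum, one_mul]
  -- a nonzero direction orthogonal to m2 with ⟪b, u⟫ ≥ 0
  obtain ⟨u, hu0, hum, hub⟩ : ∃ u : EuclideanSpace ℝ (Fin 2),
      u ≠ 0 ∧ ⟪m2, u⟫ = 0 ∧ 0 ≤ ⟪b, u⟫ := by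
    obtain ⟨u, hu0, hum⟩ : ∃ u : EuclideanSpace ℝ (Fin 2), u ≠ 0 ∧ ⟪m2, u⟫ = 0 := by
      by_cases h : m2 = 0
      · exact ⟨toE ![1, 0], by intro h0; simpa [toE] using congrArg (fun v => v 0) h0,
          by simp [h]⟩
      · refine ⟨toE ![m2 1, -(m2 0)], ?_, ?_⟩
        · intro h0
          apply h
          have h1 : m2 1 = 0 := by simpa [toE] using congrArg (fun v => v 0) h0
          have h2 : m2 0 = 0 := by simpa [toE] using congrArg (fun v => v 1) h0
          ext i; fin_cases i <;> simp [h1, h2]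
        · simp [PiLp.inner_apply, Fin.sum_univ_two, RCLike.inner_apply, toE]
          ring
    rcases le_or_gt 0 (⟪b, u⟫) with h | h
    · exact ⟨u, hu0, hum, h⟩
    · exact ⟨-u, neg_ne_zero.mpr hu0, by rw [inner_neg_right, hum, neg_zero],
        by rw [inner_neg_right]; linarith⟩
  have hun : (0:ℝ) < ‖u‖ := norm_pos_iff.mpr hu0
  -- find t ≥ 0 with ‖xl + t • u‖ = Imax
  have hcont : Continuous fun t : ℝ => ‖xl + t • u‖ := by fun_prop
  set T : ℝ := (Imax + ‖xl‖) / ‖u‖ with hT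
  have hT0 : 0 ≤ T := by positivity
  have hfT : Imax ≤ ‖xl + T • u‖ := by
    have h1 : ‖T • u‖ ≤ ‖xl + T • u‖ + ‖xl‖ := by
      have := norm_sub_le (xl + T • u) xl
      simpa using this
    have h2 : ‖T • u‖ = Imax + ‖xl‖ := by
      rw [norm_smul, Real.norm_eq_abs, abs_of_nonneg hT0, hT,
        div_mul_cancel₀ _ (ne_of_gt hun)]
    linarith
  obtain ⟨t, htmem, htval⟩ :=
    intermediate_value_Icc hT0 hcont.continuousOn (by
      constructor
      · simpa using hxlI
      · exact hfT)
  have ht0 : 0 ≤ t := htmem.1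
  -- second IVT: along s ↦ xl + s • (t • u)
  have hgcont : Continuous fun s : ℝ =>
      (R ^ 2 + X ^ 2) * ‖xl + s • (t • u)‖ ^ 2 + 2 * ⟪b, xl + s • (t • u)⟫ + ‖E‖ ^ 2 := by
    have hc1 : Continuous fun s : ℝ => xl + s • (t • u) := by fun_prop
    have hc2 : Continuous fun s : ℝ => ⟪b, xl + s • (t • u)⟫ :=
      Continuous.inner continuous_const hc1
    have hc3 : Continuous fun s : ℝ => ‖xl + s • (t • u)‖ := hc1.norm
    exact ((continuous_const.mul (hc3.pow 2)).add (continuous_const.mul hc2)).add continuous_const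
  set Vt : ℝ := lam * ((R ^ 2 + X ^ 2) * ‖x‖ ^ 2 + 2 * ⟪b, x⟫ + ‖E‖ ^ 2)
    + mu * ((R ^ 2 + X ^ 2) * ‖y‖ ^ 2 + 2 * ⟪b, y⟫ + ‖E‖ ^ 2) with hVt
  have hinner : ⟪b, xl⟫ = lam * ⟪b, x⟫ + mu * ⟪b, y⟫ := by
    rw [hxl, inner_add_right, real_inner_smul_right, real_inner_smul_right]
  have hg0 : (R ^ 2 + X ^ 2) * ‖xl + (0:ℝ) • (t • u)‖ ^ 2
      + 2 * ⟪b, xl + (0:ℝ) • (t • u)⟫ + ‖E‖ ^ 2 ≤ Vt := by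
    have hz : xl + (0:ℝ) • (t • u) = xl := by module
    rw [hz]
    have hnorm : ‖xl‖ ≤ lam * ‖x‖ + mu * ‖y‖ := by
      calc ‖xl‖ ≤ ‖lam • x‖ + ‖mu • y‖ := norm_add_le _ _
      _ = lam * ‖x‖ + mu * ‖y‖ := by
          rw [norm_smul, norm_smul, Real.norm_eq_abs, Real.norm_eq_abs,
            abs_of_nonneg hlam, abs_of_nonneg hmu]
    have hsq : ‖xl‖ ^ 2 ≤ lam * ‖x‖ ^ 2 + mu * ‖y‖ ^ 2 := by
      nlinarith [norm_nonneg xl, sq_nonneg (‖x‖ - ‖y‖), mul_nonneg hlam hmu]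
    rw [hVt]
    nlinarith [hsq]
  have htval' : ‖xl + t • u‖ = Imax := htval
  have hg1 : Vt ≤ (R ^ 2 + X ^ 2) * ‖xl + (1:ℝ) • (t • u)‖ ^ 2
      + 2 * ⟪b, xl + (1:ℝ) • (t • u)⟫ + ‖E‖ ^ 2 := by
    have e1 : ⟪b, xl + (1:ℝ) • (t • u)⟫
        = lam * ⟪b, x⟫ + mu * ⟪b, y⟫ + t * ⟪b, u⟫ := by
      simp only [hxl, one_smul, inner_add_right, real_inner_smul_right]
    have hnormxi : ‖xl + (1:ℝ) • (t • u)‖ = Imax := by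
      rw [one_smul]; exact htval'
    have hx2 : ‖x‖ ^ 2 ≤ Imax ^ 2 := by nlinarith [norm_nonneg x]
    have hy2 : ‖y‖ ^ 2 ≤ Imax ^ 2 := by nlinarith [norm_nonneg y]
    have htb : 0 ≤ t * ⟪b, u⟫ := mul_nonneg ht0 hub
    have h1 : lam * ‖x‖ ^ 2 ≤ lam * Imax ^ 2 := mul_le_mul_of_nonneg_left hx2 hlam
    have h2 : mu * ‖y‖ ^ 2 ≤ mu * Imax ^ 2 := mul_le_mul_of_nonneg_left hy2 hmu
    have h1' : (R ^ 2 + X ^ 2) * (lam * ‖x‖ ^ 2) ≤ (R ^ 2 + X ^ 2) * (lam * Imax ^ 2) :=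
      mul_le_mul_of_nonneg_left h1 hd0.le
    have h2' : (R ^ 2 + X ^ 2) * (mu * ‖y‖ ^ 2) ≤ (R ^ 2 + X ^ 2) * (mu * Imax ^ 2) :=
      mul_le_mul_of_nonneg_left h2 hd0.le
    have hc1 : lam * ‖E‖ ^ 2 + mu * ‖E‖ ^ 2 = ‖E‖ ^ 2 := by
      linear_combination (‖E‖ ^ 2) * hsum
    have hc2 : (R ^ 2 + X ^ 2) * (lam * Imax ^ 2) + (R ^ 2 + X ^ 2) * (mu * Imax ^ 2)
        = (R ^ 2 + X ^ 2) * Imax ^ 2 := by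
      linear_combination ((R ^ 2 + X ^ 2) * Imax ^ 2) * hsum
    rw [hVt, hnormxi, e1]
    nlinarith [h1', h2', htb, hc1, hc2]
  obtain ⟨s, hsmem, hsval⟩ :=
    intermediate_value_Icc (by norm_num : (0:ℝ) ≤ 1) hgcont.continuousOn ⟨hg0, hg1⟩
  set xi : EuclideanSpace ℝ (Fin 2) := xl + s • (t • u) with hxi
  have hsval' : (R ^ 2 + X ^ 2) * ‖xi‖ ^ 2 + 2 * ⟪b, xi⟫ + ‖E‖ ^ 2 = Vt := hsval
  refine ⟨xi, ?_, ?_⟩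
  · -- norm bound: xi is on segment from xl to xl + t • u
    have hconv : xi = (1 - s) • xl + s • (xl + t • u) := by
      rw [hxi]
      module
    rw [hconv]
    calc ‖(1 - s) • xl + s • (xl + t • u)‖
        ≤ ‖(1 - s) • xl‖ + ‖s • (xl + t • u)‖ := norm_add_le _ _
      _ = (1 - s) * ‖xl‖ + s * ‖xl + t • u‖ := by
          rw [norm_smul, norm_smul, Real.norm_eq_abs, Real.norm_eq_abs,
            abs_of_nonneg (by linarith [hsmem.2] : (0:ℝ) ≤ 1 - s),
            abs_of_nonneg hsmem.1]
      _ ≤ (1 - s) * Imax + s * Imax := by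
          apply add_le_add
          · exact mul_le_mul_of_nonneg_left hxlI (by linarith [hsmem.2])
          · exact mul_le_mul_of_nonneg_left (le_of_eq htval') hsmem.1
      _ = Imax := by ring
  · -- the two coordinate equalities
    have hm2xi : ⟪m2, xi⟫ = lam * ⟪m2, x⟫ + mu * ⟪m2, y⟫ := by
      rw [hxi, inner_add_right, hxl, inner_add_right, real_inner_smul_right,
        real_inner_smul_right, real_inner_smul_right, real_inner_smul_right, hum]
      ring
    have keyx := key x
    have keyy := key y
    have keyxi := key xi
    have hVeq : (R ^ 2 + X ^ 2) * ‖xi‖ ^ 2 + 2 * ⟪b, xi⟫ + ‖E‖ ^ 2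
        = lam * ((R ^ 2 + X ^ 2) * ‖x‖ ^ 2 + 2 * ⟪b, x⟫ + ‖E‖ ^ 2)
          + mu * ((R ^ 2 + X ^ 2) * ‖y‖ ^ 2 + 2 * ⟪b, y⟫ + ‖E‖ ^ 2) := by
      rw [hsval', hVt]
    have hQeq : (3 / 2) * X * ‖xi‖ ^ 2 + (3 / 2) * ⟪a, xi⟫
        = lam * ((3 / 2) * X * ‖x‖ ^ 2 + (3 / 2) * ⟪a, x⟫)
          + mu * ((3 / 2) * X * ‖y‖ ^ 2 + (3 / 2) * ⟪a, y⟫) := by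
      have hne : (R ^ 2 + X ^ 2) ≠ 0 := ne_of_gt hd0
      apply mul_left_cancel₀ hne
      linear_combination (-1 : ℝ) * keyxi + lam * keyx + mu * keyy
        + ((3/2) * X) * hVeq - hm2xi + ((3/2) * X * ‖E‖ ^ 2) * hsum
    simp only [Prod.smul_mk, Prod.mk_add_mk, Prod.mk.injEq, smul_eq_mul]
    exact ⟨hQeq.symm, hVeq.symm⟩

/-- the feasible `(Q, V²)` output region of a current-limited
grid-connected converter is convex (here `R ≠ 0`). -/
theorem stmt4 (E : EuclideanSpace ℝ (Fin 2)) (hE : E ≠ 0) (R X : ℝ) (hR : R ≠ 0)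
    (Imax : ℝ) (hI : 0 < Imax) :
    Convex ℝ {p : ℝ × ℝ | ∃ x : EuclideanSpace ℝ (Fin 2), ‖x‖ ≤ Imax ∧
      p = ((3 / 2) * X * ‖x‖ ^ 2 + (3 / 2) * ⟪Jv E, x⟫,
           (R ^ 2 + X ^ 2) * ‖x‖ ^ 2 + 2 * ⟪ZtE R X E, x⟫ + ‖E‖ ^ 2)} :=
  stmt4_aux E R X hR Imax hI (Jv E) (ZtE R X E)
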